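/- Let n ≥ 2 be an integer and let G be a graph. If the graph semiring S_G satisfies the identity p_n ≈ c_n, then the length of every cycle of G divides n. -/

import Mathlib

universe u

-- The underlying set of the graph semiring of a graph with vertex set `V`:
-- the vertices together with two extra elements `0` and `ω`.
inductive GS (V : Type u) : Type u where
  | zero : GS V
  | omega : GS V
  | vert : V → GS V

-- Multiplication of the graph semiring: `x·y = ω` if `x, y` are vertices joined by an
-- edge, and `x·y = 0` otherwise.
open Classical in
noncomputable def gsMul {V : Type u} (E : V → V → Prop) : GS V → GS V → GS V
  | GS.vert a, GS.vert b => if E a b then GS.omega else GS.zero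
  | _, _ => GS.zero

-- The flat addition of the graph semiring: `a + b = a` if `a = b`, else `0`.
open Classical in
noncomputable def gsAdd {V : Type u} (a b : GS V) : GS V :=
  if a = b then a else GS.zero

-- `gsSum f n = f 0 + f 1 + ⋯ + f n` (a sum of `n + 1` terms).
noncomputable def gsSum {V : Type u} (f : ℕ → GS V) : ℕ → GS V
  | 0 => f 0
  | n + 1 => gsAdd (gsSum f n) (f (n + 1))

-- `E` is a graph (in the sense of the paper): a directed graph with no isolated
-- vertices in which every vertex has out-degree at most 1 and in-degree at most 1.
def IsGraph {V : Type u} (E : V → V → Prop) : Prop :=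
  (∀ v : V, ∃ u : V, E v u ∨ E u v) ∧
  (∀ v a b : V, E v a → E v b → a = b) ∧
  (∀ v a b : V, E a v → E b v → a = b)

-- `v 0, v 1, …, v (m - 1)` is a path of the graph `E` with `m` vertices.
def IsPathOn {V : Type u} (E : V → V → Prop) (m : ℕ) (v : ℕ → V) : Prop :=
  (∀ i < m, ∀ j < m, v i = v j → i = j) ∧
  (∀ i : ℕ, i + 1 < m → E (v i) (v (i + 1)))

-- `v 0, v 1, …, v (m - 1)` is a cycle of the graph `E` of length `m`.
def IsCycleOn {V : Type u} (E : V → V → Prop) (m : ℕ) (v : ℕ → V) : Prop :=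
  1 ≤ m ∧
  (∀ i < m, ∀ j < m, v i = v j → i = j) ∧
  (∀ i : ℕ, i + 1 < m → E (v i) (v (i + 1))) ∧
  E (v (m - 1)) (v 0)

-- The value of the term `p_n(x_1, …, x_n) = x_1x_2 + x_2x_3 + ⋯ + x_{n-1}x_n` in the
-- graph semiring, under the assignment `x_{i+1} ↦ g i` (for `n ≥ 2`).
noncomputable def pTerm {V : Type u} (E : V → V → Prop) (g : ℕ → GS V) (n : ℕ) : GS V :=
  gsSum (fun i => gsMul E (g i) (g (i + 1))) (n - 2)

-- The graph semiring of `E` satisfies the identity `p_n ≈ c_n`, i.e. for all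
-- `x_1, …, x_n`: `x_1x_2 + ⋯ + x_{n-1}x_n = x_1x_2 + ⋯ + x_{n-1}x_n + x_nx_1`.
def satPC {V : Type u} (E : V → V → Prop) (n : ℕ) : Prop :=
  ∀ g : ℕ → GS V,
    pTerm E g n = gsAdd (pTerm E g n) (gsMul E (g (n - 1)) (g 0))


lemma gsSum_omega {V : Type u} (f : ℕ → GS V) (k : ℕ)
    (h : ∀ i, f i = GS.omega) : gsSum f k = GS.omega := by
  induction k with
  | zero => exact h 0
  | succ k ih => simp [gsSum, ih, gsAdd, h (k + 1)]

/-- For `n ≥ 2`, if the graph semiring of a graph `E` satisfies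
`p_n ≈ c_n`, then the length of every cycle of the graph divides `n`. -/
theorem stmt_11 {V : Type u} (E : V → V → Prop) (hG : IsGraph E)
    (n : ℕ) (hn : 2 ≤ n) (hsat : satPC E n) :
    ∀ (m : ℕ) (v : ℕ → V), IsCycleOn E m v → m ∣ n := by
  intro m v hc
  obtain ⟨hm, hinj, hpath, hclose⟩ := hc
  have hmpos : 0 < m := hm
  set g : ℕ → GS V := fun i => GS.vert (v (i % m)) with hg
  -- every consecutive product around the cycle is an edge
  have hedge : ∀ i : ℕ, E (v (i % m)) (v ((i + 1) % m)) := by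
    intro i
    have h1 : i % m < m := Nat.mod_lt _ hmpos
    by_cases hlt : i % m + 1 < m
    · have heq : (i + 1) % m = i % m + 1 := by
        rw [Nat.add_mod, Nat.mod_eq_of_lt (by omega : 1 < m),
          Nat.mod_eq_of_lt hlt]
      rw [heq]
      exact hpath _ (by omega)
    · have heq : i % m = m - 1 := by omega
      have hdvd : m ∣ (i + 1) := by
        refine ⟨i / m + 1, ?_⟩
        rw [Nat.mul_add, Nat.mul_one]
        have := Nat.div_add_mod i m
        omega
      have h0 : (i + 1) % m = 0 := Nat.mod_eq_zero_of_dvd hdvd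
      rw [h0, heq]
      exact hclose
  have hmul : ∀ i : ℕ, gsMul E (g i) (g (i + 1)) = GS.omega := by
    intro i
    show gsMul E (GS.vert (v (i % m))) (GS.vert (v ((i + 1) % m))) = GS.omega
    simp [gsMul, hedge i]
  have hp : pTerm E g n = GS.omega := gsSum_omega _ _ hmul
  have hid := hsat g
  rw [hp] at hid
  have hmo : gsMul E (g (n - 1)) (g 0) = GS.omega := by
    by_contra hne
    rw [gsAdd, if_neg (fun h => hne h.symm)] at hid
    cases hid
  have hE : E (v ((n - 1) % m)) (v (0 % m)) := by
    by_contra hne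
    rw [show g (n - 1) = GS.vert (v ((n - 1) % m)) from rfl,
      show g 0 = GS.vert (v (0 % m)) from rfl, gsMul, if_neg hne] at hmo
    cases hmo
  rw [Nat.zero_mod] at hE
  have hvv : v ((n - 1) % m) = v (m - 1) := hG.2.2 _ _ _ hE hclose
  have hlt1 : (n - 1) % m < m := Nat.mod_lt _ hmpos
  have hidx : (n - 1) % m = m - 1 := hinj _ hlt1 _ (by omega) hvv
  have := Nat.div_add_mod (n - 1) m
  refine ⟨(n - 1) / m + 1, ?_⟩
  rw [Nat.mul_add, Nat.mul_one]
  omega
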